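/- Let X ∈ ℝ^{n×p} and Y ∈ ℝ^{n×q} have orthonormal columns. If D₂(X,Y) := sqrt(max(p,q) − ‖XᵀY‖_F²) = 0, then p = q and XXᵀ = YYᵀ, i.e., the column spaces of X and Y coincide. -/

import Mathlib

open Matrix

/-- A matrix has orthonormal columns. -/
def hasOrthonormalCols {n p : ℕ} (X : Matrix (Fin n) (Fin p) ℝ) : Prop := Xᵀ * X = 1

/-- Squared Frobenius norm: ‖A‖_F² = tr(AᵀA). -/
noncomputable def frobSq {a b : ℕ} (A : Matrix (Fin a) (Fin b) ℝ) : ℝ := (Aᵀ * A).trace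

/-- Frobenius norm. -/
noncomputable def frob {a b : ℕ} (A : Matrix (Fin a) (Fin b) ℝ) : ℝ := Real.sqrt (frobSq A)

lemma hermMMt {a b : ℕ} (M : Matrix (Fin a) (Fin b) ℝ) : (M * Mᵀ).IsHermitian := by
  simpa [Matrix.conjTranspose_eq_transpose_of_trivial] using
    Matrix.isHermitian_mul_conjTranspose_self M

lemma hermMtM {a b : ℕ} (M : Matrix (Fin a) (Fin b) ℝ) : (Mᵀ * M).IsHermitian := by
  simpa [Matrix.conjTranspose_eq_transpose_of_trivial] using
    Matrix.isHermitian_conjTranspose_mul_self M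

/-- The singular values of a matrix `M`, as square roots of the eigenvalues of the
smaller of the Gram matrices `M Mᵀ` and `Mᵀ M`; there are `min a b` of them. -/
noncomputable def singVals {a b : ℕ} (M : Matrix (Fin a) (Fin b) ℝ) :
    Fin (min a b) → ℝ :=
  if a ≤ b then
    fun k => Real.sqrt ((hermMMt M).eigenvalues (Fin.castLE (Nat.min_le_left a b) k))
  else
    fun k => Real.sqrt ((hermMtM M).eigenvalues (Fin.castLE (Nat.min_le_right a b) k))

/-- Subspace distance D₂. -/
noncomputable def D2 {n p q : ℕ} (X : Matrix (Fin n) (Fin p) ℝ)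
    (Y : Matrix (Fin n) (Fin q) ℝ) : ℝ :=
  Real.sqrt (max (p : ℝ) (q : ℝ) - frobSq (Xᵀ * Y))

/-- Principal-angle distance D₁ = ‖arccos σ(XᵀY)‖₂. -/
noncomputable def D1 {n p q : ℕ} (X : Matrix (Fin n) (Fin p) ℝ)
    (Y : Matrix (Fin n) (Fin q) ℝ) : ℝ :=
  Real.sqrt (∑ k, (Real.arccos (singVals (Xᵀ * Y) k)) ^ 2)

lemma frobSq_eq_sum {a b : ℕ} (A : Matrix (Fin a) (Fin b) ℝ) :
    frobSq A = ∑ j, ∑ i, (A i j) ^ 2 := by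
  rw [frobSq, Matrix.trace]
  refine Finset.sum_congr rfl (fun j _ => ?_)
  rw [Matrix.diag_apply, Matrix.mul_apply]
  refine Finset.sum_congr rfl (fun i _ => ?_)
  rw [Matrix.transpose_apply, sq]

lemma frobSq_nonneg {a b : ℕ} (A : Matrix (Fin a) (Fin b) ℝ) : 0 ≤ frobSq A := by
  rw [frobSq_eq_sum]
  exact Finset.sum_nonneg fun j _ => Finset.sum_nonneg fun i _ => sq_nonneg _

lemma frobSq_eq_zero {a b : ℕ} {A : Matrix (Fin a) (Fin b) ℝ} (h : frobSq A = 0) :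
    A = 0 := by
  rw [frobSq_eq_sum] at h
  ext i j
  have h1 : ∀ j ∈ Finset.univ, (0:ℝ) ≤ ∑ i, (A i j) ^ 2 :=
    fun j _ => Finset.sum_nonneg fun i _ => sq_nonneg _
  have h2 := (Finset.sum_eq_zero_iff_of_nonneg h1).mp h j (Finset.mem_univ j)
  have h3 := (Finset.sum_eq_zero_iff_of_nonneg
    (fun i _ => sq_nonneg (A i j))).mp h2 i (Finset.mem_univ i)
  simpa using pow_eq_zero_iff (n := 2) (by norm_num) |>.mp h3

lemma frobSq_transpose {a b : ℕ} (A : Matrix (Fin a) (Fin b) ℝ) :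
    frobSq Aᵀ = frobSq A := by
  rw [frobSq, frobSq, Matrix.transpose_transpose, Matrix.trace_mul_comm]

lemma frobSq_proj_compl {n p q : ℕ}
    (X : Matrix (Fin n) (Fin p) ℝ) (Y : Matrix (Fin n) (Fin q) ℝ)
    (hX : hasOrthonormalCols X) (hY : hasOrthonormalCols Y) :
    frobSq ((1 - X * Xᵀ) * Y) = (q : ℝ) - frobSq (Xᵀ * Y) := by
  have hXX : ∀ (Z : Matrix (Fin p) (Fin q) ℝ), Xᵀ * (X * Z) = Z := fun Z => by
    rw [← Matrix.mul_assoc, hX, Matrix.one_mul]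
  have hkey : ((1 - X * Xᵀ) * Y)ᵀ * ((1 - X * Xᵀ) * Y)
      = Yᵀ * Y - (Xᵀ * Y)ᵀ * (Xᵀ * Y) := by
    simp only [Matrix.transpose_mul, Matrix.transpose_sub, Matrix.transpose_one,
      Matrix.transpose_transpose, Matrix.sub_mul, Matrix.mul_sub,
      Matrix.one_mul, Matrix.mul_one, Matrix.mul_assoc, hXX]
    abel
  rw [frobSq, hkey, Matrix.trace_sub]
  congr 1
  rw [hY]
  simp

/-- if D₂(X,Y) = 0 then p = q, the projectors coincide, and the column
spaces coincide. -/
theorem D2_eq_zero_imp {n p q : ℕ}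
    (X : Matrix (Fin n) (Fin p) ℝ) (Y : Matrix (Fin n) (Fin q) ℝ)
    (hX : hasOrthonormalCols X) (hY : hasOrthonormalCols Y)
    (h : D2 X Y = 0) :
    p = q ∧ X * Xᵀ = Y * Yᵀ
      ∧ Set.range X.mulVec = Set.range Y.mulVec := by
  set c := frobSq (Xᵀ * Y) with hc
  have hq' : frobSq ((1 - X * Xᵀ) * Y) = (q : ℝ) - c := frobSq_proj_compl X Y hX hY
  have hp' : frobSq ((1 - Y * Yᵀ) * X) = (p : ℝ) - c := by
    rw [frobSq_proj_compl Y X hY hX,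
      show Yᵀ * X = (Xᵀ * Y)ᵀ by rw [Matrix.transpose_mul, Matrix.transpose_transpose],
      frobSq_transpose]
  have hcq : c ≤ (q : ℝ) := by linarith [frobSq_nonneg ((1 - X * Xᵀ) * Y), hq']
  have hcp : c ≤ (p : ℝ) := by linarith [frobSq_nonneg ((1 - Y * Yᵀ) * X), hp']
  have hmax : max (p : ℝ) (q : ℝ) ≤ c := by
    rw [D2] at h
    have := Real.sqrt_eq_zero'.mp h
    linarith
  have hpc : (p : ℝ) = c := le_antisymm (le_trans (le_max_left _ _) hmax) hcp
  have hqc : (q : ℝ) = c := le_antisymm (le_trans (le_max_right _ _) hmax) hcq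
  have hpq : p = q := by exact_mod_cast hpc.trans hqc.symm
  have hPY : (1 - X * Xᵀ) * Y = 0 := frobSq_eq_zero (by rw [hq']; linarith)
  have hQX : (1 - Y * Yᵀ) * X = 0 := frobSq_eq_zero (by rw [hp']; linarith)
  have hXXY : X * Xᵀ * Y = Y := by
    rw [Matrix.sub_mul, Matrix.one_mul, sub_eq_zero] at hPY
    exact hPY.symm
  have hYYX : Y * Yᵀ * X = X := by
    rw [Matrix.sub_mul, Matrix.one_mul, sub_eq_zero] at hQX
    exact hQX.symm
  have h1 : X * Xᵀ * (Y * Yᵀ) = Y * Yᵀ := by rw [← Matrix.mul_assoc, hXXY]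
  have h2 : Y * Yᵀ * (X * Xᵀ) = X * Xᵀ := by rw [← Matrix.mul_assoc, hYYX]
  have h3 : (X * Xᵀ * (Y * Yᵀ))ᵀ = (Y * Yᵀ)ᵀ := by rw [h1]
  simp only [Matrix.transpose_mul, Matrix.transpose_transpose] at h3
  have hproj : X * Xᵀ = Y * Yᵀ := h2.symm.trans h3
  refine ⟨hpq, hproj, ?_⟩
  ext v
  constructor
  · rintro ⟨u, rfl⟩
    refine ⟨(Yᵀ * X).mulVec u, ?_⟩
    rw [Matrix.mulVec_mulVec, ← Matrix.mul_assoc, hYYX]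
  · rintro ⟨u, rfl⟩
    refine ⟨(Xᵀ * Y).mulVec u, ?_⟩
    rw [Matrix.mulVec_mulVec, ← Matrix.mul_assoc, hXXY]
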